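/- Let G be a simple, undirected, connected graph with finite vertex set, let k be a positive integer, and let R be a k-truncated resolving set of G. If a is a vertex such that d(a,x) > k for all x ∈ R, then R ∪ {a} is a k-truncated dominating resolving set of G. -/
import Mathlib


/-- The `k`-truncated distance: `min (d u v) (k+1)`. -/
noncomputable def truncDist {V : Type*} (G : SimpleGraph V) (k : ℕ) (u v : V) : ℕ :=
  min (G.dist u v) (k + 1)

/-- `S` is a `k`-truncated resolving set of `G`. -/
def IsTruncResolvingSet {V : Type*} (G : SimpleGraph V) (k : ℕ) (S : Set V) : Prop :=
  ∀ u v : V, u ≠ v → ∃ w ∈ S, truncDist G k u w ≠ truncDist G k v w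

/-- `S` is a `k`-truncated dominating resolving set of `G`. -/
def IsTruncDomResolvingSet {V : Type*} (G : SimpleGraph V) (k : ℕ) (S : Set V) : Prop :=
  IsTruncResolvingSet G k S ∧ ∀ u : V, ∃ x ∈ S, G.dist u x ≤ k

theorem insert_undominated_isDomResolving {V : Type*} [Fintype V] (G : SimpleGraph V)
    (hG : G.Connected) (k : ℕ) (hk : 0 < k) (R : Set V)
    (hR : IsTruncResolvingSet G k R) (a : V) (ha : ∀ x ∈ R, k < G.dist a x) :
    IsTruncDomResolvingSet G k (R ∪ {a}) := by
  constructor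
  · intro u v huv
    obtain ⟨w, hw, hne⟩ := hR u v huv
    exact ⟨w, Or.inl hw, hne⟩
  · intro u
    by_cases hua : G.dist u a ≤ k
    · exact ⟨a, Or.inr rfl, hua⟩
    push_neg at hua
    by_contra hc
    push_neg at hc
    have hune : u ≠ a := by
      intro h; subst h; rw [SimpleGraph.dist_self] at hua; omega
    obtain ⟨w, hw, hne⟩ := hR u a hune
    apply hne
    have h1 : k < G.dist u w := hc w (Or.inl hw)
    have h2 : k < G.dist a w := ha w hw
    unfold truncDist
    rw [min_eq_right (by omega), min_eq_right (by omega)]
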